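/- Let A be a unital C*-algebra with a unitary u and isometries w_m satisfying (B0), (B1), (B3). Then for every positive integer m and integers k, l: w_m* u^{l-k} w_m equals u^{(l-k)/m} if l ≡ k (mod m), and equals 0 otherwise. -/

import Mathlib

/-- under (B0), (B1), (B3), `w_m* u^{l-k} w_m = u^{(l-k)/m}` when
`l ≡ k (mod m)`, and `0` otherwise. -/
theorem stmt19 {A : Type*} [NormedRing A] [StarRing A] [CStarRing A]
    [NormedAlgebra ℂ A] [CompleteSpace A] [StarModule ℂ A]
    (u : unitary A) (w : ℕ → A)
    (hiso : ∀ m : ℕ, 0 < m → star (w m) * w m = 1)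
    (hB0 : ∀ m n : ℕ, 0 < m → 0 < n → w (m * n) = w m * w n)
    (hB1 : ∀ m : ℕ, 0 < m → w m * (u : A) = (u : A) ^ m * w m)
    (hB3 : ∀ p j : ℕ, Nat.Prime p → 1 ≤ j → j < p →
      star (w p) * (u : A) ^ j * w p = 0) :
    ∀ m : ℕ, 0 < m → ∀ k l : ℤ,
      (((m : ℤ) ∣ (l - k)) →
        star (w m) * (↑(u ^ (l - k)) : A) * w m = (↑(u ^ ((l - k) / m)) : A)) ∧
      (¬ ((m : ℤ) ∣ (l - k)) →
        star (w m) * (↑(u ^ (l - k)) : A) * w m = 0) := by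
  -- basic coercion facts
  have coe_mul : ∀ x y : unitary A, (↑(x * y) : A) = ↑x * ↑y := fun x y => rfl
  have coe_star : ∀ x : unitary A, star (↑x : A) = ↑(x⁻¹) := by
    intro x; rw [← Unitary.coe_star]; rfl
  -- (B1) extended to integer powers
  have comm : ∀ m : ℕ, 0 < m → ∀ j : ℤ,
      w m * (↑(u ^ j) : A) = (↑(u ^ ((m : ℤ) * j)) : A) * w m := by
    intro m hm
    have cancel : ∀ a b : ℤ, a + b = 0 → (↑(u ^ a) : A) * ↑(u ^ b) = 1 := by
      intro a b h
      rw [← coe_mul, ← zpow_add, h, zpow_zero]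
      rfl
    have h1 : (↑(u ^ ((m : ℤ))) : A) * w m = w m * (↑u : A) := by
      rw [zpow_natCast, SubmonoidClass.coe_pow]; exact (hB1 m hm).symm
    have hu1 : (↑(u ^ (1 : ℤ)) : A) = ↑u := by rw [zpow_one]
    have hinv : w m * (↑(u ^ (-1 : ℤ)) : A) = (↑(u ^ (-(m : ℤ))) : A) * w m := by
      calc w m * (↑(u ^ (-1 : ℤ)) : A)
          = (↑(u ^ (-(m : ℤ))) : A) * ((↑(u ^ ((m : ℤ))) : A) * w m) * ↑(u ^ (-1 : ℤ)) := by
            rw [← mul_assoc, cancel (-(m : ℤ)) (m : ℤ) (by ring), one_mul]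
        _ = (↑(u ^ (-(m : ℤ))) : A) * (w m * (↑(u ^ (1 : ℤ)) : A)) * ↑(u ^ (-1 : ℤ)) := by
            rw [h1, hu1]
        _ = (↑(u ^ (-(m : ℤ))) : A) * w m * ((↑(u ^ (1 : ℤ)) : A) * ↑(u ^ (-1 : ℤ))) := by
            noncomm_ring
        _ = (↑(u ^ (-(m : ℤ))) : A) * w m := by
            rw [cancel 1 (-1) (by ring), mul_one]
    intro j
    induction j using Int.induction_on with
    | zero => simp
    | succ n ih =>
      have : u ^ ((n : ℤ) + 1) = u ^ (n : ℤ) * u ^ (1 : ℤ) := by rw [← zpow_add]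
      rw [this, coe_mul, ← mul_assoc, ih, mul_assoc]
      have : (↑(u ^ (1 : ℤ)) : A) = (↑u : A) := by norm_num
      rw [this, hB1 m hm, ← mul_assoc]
      congr 1
      rw [← SubmonoidClass.coe_pow, ← coe_mul, ← zpow_natCast, ← zpow_add]
      ring_nf
    | pred n ih =>
      have : u ^ (-(n : ℤ) - 1) = u ^ (-(n : ℤ)) * u ^ (-1 : ℤ) := by
        rw [← zpow_add]; ring_nf
      rw [this, coe_mul, ← mul_assoc, ih, mul_assoc, hinv, ← mul_assoc]
      congr 1
      rw [← coe_mul, ← zpow_add]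
      ring_nf
  -- adjoint version: star (w m) * u^(m*j) = u^j * star (w m)
  have scomm : ∀ m : ℕ, 0 < m → ∀ j : ℤ,
      star (w m) * (↑(u ^ ((m : ℤ) * j)) : A) = (↑(u ^ j) : A) * star (w m) := by
    intro m hm j
    have h := comm m hm (-j)
    have h' := congrArg star h
    rw [star_mul, star_mul, coe_star, coe_star, ← zpow_neg, ← zpow_neg] at h'
    simpa [mul_neg, neg_neg] using h'.symm
  -- divisible case, for all m
  have hdivcase : ∀ m : ℕ, 0 < m → ∀ q : ℤ,
      star (w m) * (↑(u ^ ((m : ℤ) * q)) : A) * w m = (↑(u ^ q) : A) := by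
    intro m hm q
    rw [scomm m hm q, mul_assoc, hiso m hm, mul_one]
  -- non-divisible case for primes
  have hprime : ∀ p : ℕ, Nat.Prime p → ∀ j : ℤ, ¬ ((p : ℤ) ∣ j) →
      star (w p) * (↑(u ^ j) : A) * w p = 0 := by
    intro p hp j hnd
    have hp0 : 0 < p := hp.pos
    set q := j / (p : ℤ) with hq
    set r := j % (p : ℤ) with hr
    have hj : j = (p : ℤ) * q + r := (Int.mul_ediv_add_emod j p).symm
    have hr0 : 0 ≤ r := Int.emod_nonneg j (by exact_mod_cast hp0.ne')
    have hrp : r < (p : ℤ) := Int.emod_lt_of_pos j (by exact_mod_cast hp0)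
    have hrne : r ≠ 0 := by
      intro h0
      exact hnd (Int.dvd_of_emod_eq_zero (by rw [← hr, h0]))
    have hsplit : u ^ j = u ^ ((p : ℤ) * q) * u ^ r := by
      rw [← zpow_add, ← hj]
    have hurn : (↑(u ^ r) : A) = (↑u : A) ^ r.toNat := by
      rw [← SubmonoidClass.coe_pow, ← zpow_natCast, Int.toNat_of_nonneg hr0]
    have hB3' : star (w p) * (↑(u ^ r) : A) * w p = 0 := by
      rw [hurn]
      exact hB3 p r.toNat hp
        (by omega)
        (by omega)
    rw [hsplit, coe_mul, ← mul_assoc, scomm p hp0 q, mul_assoc, mul_assoc,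
      ← mul_assoc (star (w p)), hB3', mul_zero]
  -- non-divisible case, general m, by strong induction
  have hnondiv : ∀ m : ℕ, 0 < m → ∀ j : ℤ, ¬ ((m : ℤ) ∣ j) →
      star (w m) * (↑(u ^ j) : A) * w m = 0 := by
    intro m
    induction m using Nat.strong_induction_on with
    | _ m ih =>
      intro hm j hnd
      have hm1 : m ≠ 1 := by
        rintro rfl; exact hnd (by norm_num)
      set p := m.minFac with hpdef
      have hp : Nat.Prime p := Nat.minFac_prime hm1
      have hpdvd : p ∣ m := Nat.minFac_dvd m
      obtain ⟨n, hn⟩ := hpdvd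
      have hn0 : 0 < n := by
        rcases Nat.eq_zero_or_pos n with h | h
        · subst h; omega
        · exact h
      have hnm : n < m := by
        have := hp.two_le
        calc n < 2 * n := by omega
          _ ≤ p * n := by exact Nat.mul_le_mul_right n this
          _ = m := hn.symm
      have hw : w m = w p * w n := by rw [hn]; exact hB0 p n hp.pos hn0
      have key : star (w m) * (↑(u ^ j) : A) * w m
          = star (w n) * (star (w p) * (↑(u ^ j) : A) * w p) * w n := by
        rw [hw, star_mul]
        noncomm_ring
      by_cases hpd : (p : ℤ) ∣ j
      · obtain ⟨q, hq⟩ := hpd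
        have hmid : star (w p) * (↑(u ^ j) : A) * w p = (↑(u ^ q) : A) := by
          rw [hq]; exact hdivcase p hp.pos q
        rw [key, hmid]
        apply ih n hnm hn0
        intro hdq
        apply hnd
        rw [hq, hn]
        push_cast
        exact mul_dvd_mul_left (p : ℤ) hdq
      · rw [key, hprime p hp j hpd, mul_zero, zero_mul]
  intro m hm k l
  constructor
  · rintro ⟨q, hq⟩
    rw [hq, Int.mul_ediv_cancel_left q (by exact_mod_cast hm.ne')]
    exact hdivcase m hm q
  · exact hnondiv m hm (l - k)
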